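/- arXiv:2112.11306 — 2 statements merged into one kernel-verified Lean document; each statement's English description precedes it below -/
import Mathlib

section
/- The bilinear form on Sym²(H²) defined by ⟨α₁α₂, α₃α₄⟩ = (α₁,α₂)(α₃,α₄) + (α₁,α₃)(α₂,α₄) + (α₁,α₄)(α₂,α₃), where (·,·) is a non-degenerate symmetric bilinear form on a finite-dimensional rational vector space H², is itself non-degenerate. -/
open TensorProduct

/-- The bilinear form on Sym²(H²) (modelled as the swap-invariant part of H²⊗H²) defined by
⟨v₁v₂, v₃v₄⟩ = b(v₁,v₂)b(v₃,v₄) + b(v₁,v₃)b(v₂,v₄) + b(v₁,v₄)b(v₂,v₃), for b a non-degenerate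
symmetric bilinear form on a finite-dimensional rational vector space, is non-degenerate. -/
theorem stmt_0 (V : Type*) [AddCommGroup V] [Module ℚ V] [FiniteDimensional ℚ V]
    (b : V →ₗ[ℚ] V →ₗ[ℚ] ℚ) (hsymm : ∀ x y : V, b x y = b y x)
    (hnd : ∀ x : V, (∀ y : V, b x y = 0) → x = 0)
    (B : TensorProduct ℚ V V →ₗ[ℚ] TensorProduct ℚ V V →ₗ[ℚ] ℚ)
    (hB : ∀ v₁ v₂ v₃ v₄ : V, B (v₁ ⊗ₜ[ℚ] v₂) (v₃ ⊗ₜ[ℚ] v₄) =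
      b v₁ v₂ * b v₃ v₄ + b v₁ v₃ * b v₂ v₄ + b v₁ v₄ * b v₂ v₃) :
    ∀ x : TensorProduct ℚ V V, TensorProduct.comm ℚ V V x = x →
      (∀ y : TensorProduct ℚ V V, TensorProduct.comm ℚ V V y = y → B x y = 0) → x = 0 := by
  classical
  -- auxiliary linear maps
  set T : TensorProduct ℚ V V →ₗ[ℚ] (V →ₗ[ℚ] V) :=
    (dualTensorHom ℚ V V).comp (TensorProduct.map b LinearMap.id) with hTdef
  set t : TensorProduct ℚ V V →ₗ[ℚ] ℚ := TensorProduct.lift b with htdef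
  have hTpure : ∀ (a c v : V), T (a ⊗ₜ[ℚ] c) v = b a v • c := by
    intro a c v
    simp [hTdef, dualTensorHom_apply]
  have htpure : ∀ a c : V, t (a ⊗ₜ[ℚ] c) = b a c := by
    intro a c; simp [htdef]
  -- key identity
  have key : ∀ (z : TensorProduct ℚ V V) (v w : V),
      B z (v ⊗ₜ[ℚ] w) = t z * b v w + b w (T z v) + b v (T z w) := by
    intro z v w
    induction z using TensorProduct.induction_on with
    | zero => simp
    | tmul a c =>
        rw [hB, hTpure, hTpure, htpure]
        simp only [map_smul, smul_eq_mul]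
        linear_combination (b a) v * hsymm c w + (b a) w * hsymm c v
    | add z₁ z₂ h1 h2 => simp [map_add, h1, h2]; ring
  -- symmetry under comm
  have hswap : ∀ (z : TensorProduct ℚ V V) (v w : V),
      b v (T (TensorProduct.comm ℚ V V z) w) = b w (T z v) := by
    intro z v w
    induction z using TensorProduct.induction_on with
    | zero => simp
    | tmul a c =>
        rw [TensorProduct.comm_tmul, hTpure, hTpure]
        simp only [map_smul, smul_eq_mul]
        linear_combination (b c) w * hsymm v a + (b a) v * hsymm c w
    | add z₁ z₂ h1 h2 => simp [map_add, h1, h2]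
  intro x hx hxy
  -- B x (v⊗w) = 0 for all v w
  have hx0 : ∀ v w : V, B x (v ⊗ₜ[ℚ] w) = 0 := by
    intro v w
    have hsymY : TensorProduct.comm ℚ V V (v ⊗ₜ[ℚ] w + w ⊗ₜ[ℚ] v) = v ⊗ₜ[ℚ] w + w ⊗ₜ[ℚ] v := by
      simp [TensorProduct.comm_tmul, add_comm]
    have h2 := hxy _ hsymY
    rw [map_add, key x v w, key x w v] at h2
    have e1 := hswap x v w
    rw [hx] at e1
    rw [key x v w]
    rw [hsymm w v] at h2
    linarith [h2, e1]
  -- hence T x v = -(t x / 2) • v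
  have hop : ∀ v : V, T x v = (-(t x / 2)) • v := by
    intro v
    have h3 : ∀ w : V, b (T x v + (t x / 2) • v) w = 0 := by
      intro w
      have := hx0 v w
      rw [key x v w] at this
      have e1 := hswap x v w
      rw [hx] at e1
      rw [e1] at this
      have : t x * b v w + 2 * b w (T x v) = 0 := by linarith
      rw [map_add, map_smul]
      simp only [LinearMap.add_apply, LinearMap.smul_apply, smul_eq_mul]
      rw [hsymm (T x v) w]
      linarith
    have := hnd _ h3
    have h4 : T x v = -((t x / 2) • v) := by
      rw [← sub_eq_zero]; rw [sub_neg_eq_add]; exact this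
    rw [h4, neg_smul]
  -- trace of T x equals t x
  have htr : LinearMap.trace ℚ V (T x) = t x := by
    have : ∀ z : TensorProduct ℚ V V, LinearMap.trace ℚ V (T z) = t z := by
      intro z
      induction z using TensorProduct.induction_on with
      | zero => simp
      | tmul a c =>
          have : T (a ⊗ₜ[ℚ] c) = dualTensorHom ℚ V V ((b a) ⊗ₜ[ℚ] c) := by
            simp [hTdef]
          rw [this, LinearMap.trace_eq_contract_apply, contractLeft_apply, htpure]
      | add z₁ z₂ h1 h2 => simp [map_add, h1, h2]
    exact this x
  -- T x = scalar • id, so trace = scalar * dim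
  have hTx : T x = (-(t x / 2)) • (LinearMap.id : V →ₗ[ℚ] V) := by
    ext v; simpa using hop v
  have hdim : LinearMap.trace ℚ V (T x) = (-(t x / 2)) * (Module.finrank ℚ V : ℚ) := by
    rw [hTx, map_smul, LinearMap.trace_id]
    simp [mul_comm]
  have ht0 : t x = 0 := by
    have h := htr.symm.trans hdim
    have hn : (0:ℚ) ≤ (Module.finrank ℚ V : ℚ) := by positivity
    have h2 : t x * (2 + (Module.finrank ℚ V : ℚ)) = 0 := by linear_combination 2 * h
    have hpos : (2 + (Module.finrank ℚ V : ℚ)) ≠ 0 := by positivity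
    exact (mul_eq_zero.mp h2).resolve_right hpos
  have hTx0 : T x = 0 := by rw [hTx, ht0]; simp
  have hbinj : Function.Injective b := by
    intro u v huv
    have h5 : ∀ w, b (u - v) w = 0 := by
      intro w; rw [map_sub]; simp [huv]
    exact sub_eq_zero.mp (hnd _ h5)
  have hmapinj : Function.Injective (TensorProduct.map b (LinearMap.id : V →ₗ[ℚ] V)) := by
    have : TensorProduct.map b (LinearMap.id : V →ₗ[ℚ] V) = LinearMap.rTensor V b := rfl
    rw [this]
    exact Module.Flat.rTensor_preserves_injective_linearMap b hbinj
  have hdinj : Function.Injective (dualTensorHom ℚ V V : Module.Dual ℚ V ⊗[ℚ] V →ₗ[ℚ] V →ₗ[ℚ] V) := by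
    rw [← dualTensorHomEquivOfBasis_toLinearMap (N := V) (Module.Free.chooseBasis ℚ V)]
    exact (dualTensorHomEquivOfBasis _).injective
  have : TensorProduct.map b (LinearMap.id : V →ₗ[ℚ] V) x = 0 := by
    apply hdinj
    rw [map_zero]; exact hTx0
  exact hmapinj (by simpa using this)
end

section
/- The hyperbolic lattice U, i.e. ℤ² with bilinear form given by the Gram matrix [[0,1],[1,0]], is the unique (up to isometry) even unimodular lattice of rank 2 and signature (1,1). -/
open Matrix

private lemma newBasis {L : Type*} [AddCommGroup L] (e : Module.Basis (Fin 2) ℤ L)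
    (P : Matrix (Fin 2) (Fin 2) ℤ) (hP : IsUnit P.det) :
    ∃ f : Module.Basis (Fin 2) ℤ L, ∀ i, f i = P 0 i • e 0 + P 1 i • e 1 := by
  have h : IsUnit (LinearMap.toMatrix e e (Matrix.toLin e e P)).det := by
    rwa [LinearMap.toMatrix_toLin]
  refine ⟨e.map (LinearEquiv.ofIsUnitDet h), fun i => ?_⟩
  rw [Module.Basis.map_apply, LinearEquiv.ofIsUnitDet_apply, Matrix.toLin_self]
  simp [Fin.sum_univ_two]

private lemma gram_eq {L : Type*} [AddCommGroup L] (b : L →ₗ[ℤ] L →ₗ[ℤ] ℤ)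
    (e : Module.Basis (Fin 2) ℤ L) (P : Matrix (Fin 2) (Fin 2) ℤ) (f : Fin 2 → L)
    (hf : ∀ i, f i = P 0 i • e 0 + P 1 i • e 1) :
    (Matrix.of fun i j => b (f i) (f j)) =
      Pᵀ * (Matrix.of fun i j => b (e i) (e j)) * P := by
  ext i j
  simp only [Matrix.of_apply, hf, Matrix.mul_apply, Fin.sum_univ_two, map_add,
    _root_.map_smul, LinearMap.add_apply, LinearMap.smul_apply, smul_eq_mul,
    Matrix.transpose_apply]
  ring

private lemma lemA (L : Type*) [AddCommGroup L]
    (b : L →ₗ[ℤ] L →ₗ[ℤ] ℤ) (hsymm : ∀ x y : L, b x y = b y x)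
    (e : Module.Basis (Fin 2) ℤ L)
    (heven : ∀ x : L, 2 ∣ b x x)
    (huni : IsUnit (Matrix.of fun i j => b (e i) (e j) : Matrix (Fin 2) (Fin 2) ℤ).det)
    (hsig : (Matrix.of fun i j => b (e i) (e j) : Matrix (Fin 2) (Fin 2) ℤ).det < 0)
    (h0 : b (e 0) (e 0) = 0) :
    ∃ f : Module.Basis (Fin 2) ℤ L,
      b (f 0) (f 0) = 0 ∧ b (f 1) (f 1) = 0 ∧ b (f 0) (f 1) = 1 ∧ b (f 1) (f 0) = 1 := by
  obtain ⟨b', hB⟩ := heven (e 1)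
  set C := b (e 0) (e 1) with hCdef
  have hsy : b (e 1) (e 0) = C := (hsymm (e 1) (e 0))
  have hdet : (Matrix.of fun i j => b (e i) (e j) : Matrix (Fin 2) (Fin 2) ℤ).det
      = b (e 0) (e 0) * b (e 1) (e 1) - C * C := by
    rw [Matrix.det_fin_two]
    simp [hsy, hCdef]
  have hC2 : C * C = 1 := by
    rcases Int.isUnit_iff.mp huni with h | h
    · rw [hdet, h0] at h; nlinarith
    · rw [hdet, h0] at h; linarith
  have hPdet : IsUnit (!![(1:ℤ), -b'; 0, C]).det := by
    rw [Matrix.det_fin_two_of]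
    simp
    exact IsUnit.of_mul_eq_one C hC2
  obtain ⟨f, hf⟩ := newBasis e !![(1:ℤ), -b'; 0, C] hPdet
  have hf0 : f 0 = e 0 := by rw [hf 0]; simp
  have hf1 : f 1 = (-b') • e 0 + C • e 1 := by rw [hf 1]; simp
  refine ⟨f, ?_, ?_, ?_, ?_⟩
  · rw [hf0]; exact h0
  · rw [hf1]
    simp only [map_add, _root_.map_smul, LinearMap.add_apply, LinearMap.smul_apply, smul_eq_mul]
    rw [h0, hsy, ← hCdef, hB]
    nlinarith [hC2]
  · rw [hf0, hf1]
    simp only [map_add, _root_.map_smul, LinearMap.add_apply, LinearMap.smul_apply, smul_eq_mul]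
    rw [h0, ← hCdef]
    linarith [hC2]
  · rw [hf0, hf1]
    simp only [map_add, _root_.map_smul, LinearMap.add_apply, LinearMap.smul_apply, smul_eq_mul]
    rw [h0, hsy]
    linarith [hC2]

/-- The hyperbolic lattice U is the unique (up to isometry) even unimodular lattice of rank 2
and signature (1,1): any rank-2 lattice (free ℤ-module with symmetric ℤ-valued bilinear form)
which is even, unimodular (Gram determinant a unit) and of signature (1,1) (for a 2×2 symmetric
matrix this means the Gram determinant is negative) admits a basis with Gram matrix
[[0,1],[1,0]]. -/
theorem stmt_3 (L : Type*) [AddCommGroup L]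
    (b : L →ₗ[ℤ] L →ₗ[ℤ] ℤ) (hsymm : ∀ x y : L, b x y = b y x)
    (e : Module.Basis (Fin 2) ℤ L)
    (heven : ∀ x : L, 2 ∣ b x x)
    (huni : IsUnit (Matrix.of fun i j => b (e i) (e j) : Matrix (Fin 2) (Fin 2) ℤ).det)
    (hsig : (Matrix.of fun i j => b (e i) (e j) : Matrix (Fin 2) (Fin 2) ℤ).det < 0) :
    ∃ f : Module.Basis (Fin 2) ℤ L,
      b (f 0) (f 0) = 0 ∧ b (f 1) (f 1) = 0 ∧ b (f 0) (f 1) = 1 ∧ b (f 1) (f 0) = 1 := by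
  by_cases h0 : b (e 0) (e 0) = 0
  · exact lemA L b hsymm e heven huni hsig h0
  -- general case
  obtain ⟨a, hA⟩ := heven (e 0)
  obtain ⟨b', hB⟩ := heven (e 1)
  have ha : a ≠ 0 := by intro h; apply h0; rw [hA, h]; ring
  set c := b (e 0) (e 1) with hCdef
  have hsy : b (e 1) (e 0) = c := hsymm (e 1) (e 0)
  have hdet : (Matrix.of fun i j => b (e i) (e j) : Matrix (Fin 2) (Fin 2) ℤ).det
      = 2*a * (2*b') - c * c := by
    rw [Matrix.det_fin_two]
    simp [hsy, hA, hB, hCdef]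
  have hdet1 : (Matrix.of fun i j => b (e i) (e j) : Matrix (Fin 2) (Fin 2) ℤ).det = -1 := by
    rcases Int.isUnit_iff.mp huni with h | h
    · linarith [hsig]
    · exact h
  have key : 4 * (a * b') = c * c - 1 := by rw [hdet] at hdet1; ring_nf; ring_nf at hdet1; linarith
  have hcodd : Odd c := by
    rcases Int.even_or_odd c with ⟨k, hk⟩ | h
    · exfalso
      have h1 : 4 * (a * b') = 4 * (k * k) - 1 := by rw [hk] at key; linear_combination key
      generalize a * b' = x at h1
      generalize k * k = y at h1
      omega
    · exact h
  obtain ⟨m, hm⟩ := hcodd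
  have hab : a * b' = m * (m + 1) := by
    have h4 : 4 * (a * b') = 4 * (m * (m + 1)) := by
      linear_combination key + (c + 2 * m + 1) * hm
    linarith
  set g : ℤ := ↑(Int.gcd m a) with hgdef
  have hg0 : g ≠ 0 := by
    simp only [hgdef, ne_eq, Int.natCast_eq_zero, Int.gcd_eq_zero_iff, not_and]
    intro _; exact ha
  have hgm : g ∣ m := Int.gcd_dvd_left m a
  have hga : g ∣ a := Int.gcd_dvd_right m a
  set p : ℤ := m / g with hpdef
  set q : ℤ := a / g with hqdef
  have hmp : m = g * p := (Int.mul_ediv_cancel' hgm).symm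
  have haq : a = g * q := (Int.mul_ediv_cancel' hga).symm
  have hq0 : q ≠ 0 := by intro h; apply ha; rw [haq, h, mul_zero]
  have hcop : IsCoprime p q := by
    rw [Int.isCoprime_iff_gcd_eq_one, hpdef, hqdef, hgdef]
    exact Int.gcd_div_gcd_div_gcd (Int.gcd_pos_of_ne_zero_right m ha)
  obtain ⟨u, v, huv⟩ := hcop
  -- key isotropy identity
  have hkey : p * p * a - p * q * c + q * q * b' = 0 := by
    have h1 : g * (g * (p * p) - p * c + q * b') = 0 := by
      have : m * m - m * c + a * b' = 0 := by rw [hm, hab]; ring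
      calc g * (g * (p * p) - p * c + q * b') = m * m - m * c + a * b' := by
            rw [hmp, haq]; ring
        _ = 0 := this
    have h2 : g * (p * p) - p * c + q * b' = 0 := by
      rcases mul_eq_zero.mp h1 with h | h
      · exact absurd h hg0
      · exact h
    calc p * p * a - p * q * c + q * q * b' = q * (g * (p * p) - p * c + q * b') := by
          rw [haq]; ring
      _ = 0 := by rw [h2]; ring
  set P : Matrix (Fin 2) (Fin 2) ℤ := !![-p, -v; q, -u] with hPdef
  have hPd : P.det = 1 := by
    rw [hPdef, Matrix.det_fin_two_of]; linarith [huv]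
  obtain ⟨f, hf⟩ := newBasis e P (by rw [hPd]; exact isUnit_one)
  have hgram := gram_eq b e P f hf
  have hdetf : (Matrix.of fun i j => b (f i) (f j) : Matrix (Fin 2) (Fin 2) ℤ).det
      = (Matrix.of fun i j => b (e i) (e j) : Matrix (Fin 2) (Fin 2) ℤ).det := by
    rw [hgram, Matrix.det_mul, Matrix.det_mul, Matrix.det_transpose, hPd]
    ring
  have hf0 : b (f 0) (f 0) = 0 := by
    rw [hf 0]
    simp only [map_add, _root_.map_smul, LinearMap.add_apply, LinearMap.smul_apply, smul_eq_mul,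
      hPdef, Matrix.cons_val', Matrix.cons_val_zero, Matrix.cons_val_one, Matrix.head_cons,
      Matrix.empty_val', Matrix.cons_val_fin_one, Matrix.head_fin_const, Matrix.of_apply]
    rw [hA, hB, hsy, ← hCdef]
    nlinarith [hkey]
  exact lemA L b hsymm f heven (by rw [hdetf]; exact huni) (by rw [hdetf]; exact hsig) hf0
end
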